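/- Any two reticulations of a coherent quantale are isomorphic: if (L, λ) and (L', λ') are reticulations of A, then there is a bounded-lattice isomorphism f : L → L' with f ∘ λ = λ'. -/
import Mathlib


open CompleteLattice

/-- A commutative unital quantale: a complete lattice with a commutative monoid
multiplication distributing over arbitrary joins, whose unit is the top element. -/
class CommQuantale (A : Type*) extends CompleteLattice A, CommMonoid A where
  one_eq_top : (1 : A) = ⊤
  mul_sSup : ∀ (a : A) (S : Set A), a * sSup S = ⨆ b ∈ S, a * b

namespace CommQuantale

variable {A : Type*} [CommQuantale A]

/-- A coherent quantale: algebraic, with `1 = ⊤` compact and compacts closed under `*`. -/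
def Coherent (A : Type*) [CommQuantale A] : Prop :=
  (∀ a : A, a = sSup {c : A | IsCompactElement c ∧ c ≤ a}) ∧
  IsCompactElement (⊤ : A) ∧
  ∀ c d : A, IsCompactElement c → IsCompactElement d → IsCompactElement (c * d)

/-- m-prime element. -/
def MPrime (p : A) : Prop :=
  p < ⊤ ∧ ∀ a b : A, a * b ≤ p → a ≤ p ∨ b ≤ p

/-- The radical of an element. -/
def rad (a : A) : A := sInf {p : A | MPrime p ∧ a ≤ p}

/-- Maximal element of `A \ {1}`. -/
def MaxElem (m : A) : Prop := m < ⊤ ∧ ∀ x : A, m ≤ x → x < ⊤ → x = m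

/-- Radical element. -/
def RadElem (a : A) : Prop := rad a = a

/-- Residuation `a → b`. -/
def res (a b : A) : A := sSup {x : A | a * x ≤ b}

/-- Complemented element (member of the Boolean center `B(A)`). -/
def Complemented (e : A) : Prop := ∃ f : A, e ⊔ f = ⊤ ∧ e ⊓ f = ⊥

end CommQuantale

open CommQuantale

/-- A reticulation of a coherent quantale `A`: a bounded distributive lattice `L`
with a map `l` which is surjective from the compacts of `A` onto `L` and satisfies
the reticulation axioms on compact elements. -/
structure IsReticulation (A : Type*) [CommQuantale A] (L : Type*)
    [DistribLattice L] [BoundedOrder L] (l : A → L) : Prop where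
  surj : ∀ y : L, ∃ c : A, IsCompactElement c ∧ l c = y
  le_sup : ∀ a b : A, IsCompactElement a → IsCompactElement b → l (a ⊔ b) ≤ l a ⊔ l b
  map_mul : ∀ a b : A, IsCompactElement a → IsCompactElement b → l (a * b) = l a ⊓ l b
  le_iff : ∀ a b : A, IsCompactElement a → IsCompactElement b →
    (l a ≤ l b ↔ ∃ n : ℕ, 1 ≤ n ∧ a ^ n ≤ b)

theorem stmt10 {A : Type*} [CommQuantale A]
    {L : Type*} [DistribLattice L] [BoundedOrder L]
    {L' : Type*} [DistribLattice L'] [BoundedOrder L']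
    (hA : Coherent A) {l : A → L} {l' : A → L'}
    (h : IsReticulation A L l) (h' : IsReticulation A L' l') :
    ∃ f : L ≃o L', ∀ c : A, IsCompactElement c → f (l c) = l' c := by
  classical
  have key : ∀ a b : A, IsCompactElement a → IsCompactElement b → (l a ≤ l b ↔ l' a ≤ l' b) := by
    intro a b ha hb
    rw [h.le_iff a b ha hb, h'.le_iff a b ha hb]
  choose c hc hlc using h.surj
  choose c' hc' hlc' using h'.surj
  let g : L → L' := fun y => l' (c y)
  let g' : L' → L := fun y => l (c' y)
  have hg : ∀ a : A, IsCompactElement a → g (l a) = l' a := by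
    intro a ha
    have h1 := (key (c (l a)) a (hc _) ha).mp (le_of_eq (hlc _))
    have h2 := (key a (c (l a)) ha (hc _)).mp (le_of_eq (hlc _).symm)
    exact le_antisymm h1 h2
  have hg' : ∀ a : A, IsCompactElement a → g' (l' a) = l a := by
    intro a ha
    have h1 := (key (c' (l' a)) a (hc' _) ha).mpr (le_of_eq (hlc' _))
    have h2 := (key a (c' (l' a)) ha (hc' _)).mpr (le_of_eq (hlc' _).symm)
    exact le_antisymm h1 h2
  have hgg' : ∀ y, g' (g y) = y := by
    intro y
    have := hg' (c y) (hc y)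
    simp only [g, g'] at *
    rw [this, hlc]
  have hg'g : ∀ y, g (g' y) = y := by
    intro y
    have := hg (c' y) (hc' y)
    simp only [g, g'] at *
    rw [this, hlc']
  have mono : ∀ y z : L, y ≤ z → g y ≤ g z := by
    intro y z hyz
    have hl : l (c y) ≤ l (c z) := by rw [hlc, hlc]; exact hyz
    exact (key _ _ (hc y) (hc z)).mp hl
  have mono' : ∀ y z : L', y ≤ z → g' y ≤ g' z := by
    intro y z hyz
    have hl : l' (c' y) ≤ l' (c' z) := by rw [hlc', hlc']; exact hyz
    exact (key _ _ (hc' y) (hc' z)).mpr hl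
  refine ⟨{ toFun := g, invFun := g', left_inv := hgg', right_inv := hg'g,
            map_rel_iff' := ?_ }, fun a ha => hg a ha⟩
  intro y z
  constructor
  · intro hgy
    have hgy2 : g y ≤ g z := hgy
    have := mono' _ _ hgy2
    rwa [hgg', hgg'] at this
  · exact mono _ _
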